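/- Let ν ≥ 0, α > -1, and let p_{n,m}^α be as above (monic type-2 multiple orthogonal polynomials for weights x^α ρ_ν, x^α ρ_(ν+1)). Then (p_{n,n-1}^α)'(x) = (2n-1) · p_{n-1,n-1}^(α+1)(x) for all n ≥ 1. -/

import Mathlib

open MeasureTheory Real Set

noncomputable def rho (ν x : ℝ) : ℝ :=
  ∫ t in Set.Ioi (0:ℝ), t ^ (ν - 1) * Real.exp (-t - x / t)

noncomputable def K (ν z : ℝ) : ℝ :=
  (1/2) * (z/2) ^ ν * ∫ t in Set.Ioi (0:ℝ), Real.exp (-t - z^2 / (4*t)) * t ^ (-ν - 1)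

open Filter Topology


lemma pow_le_factorial_mul_exp {u : ℝ} (hu : 0 ≤ u) (m : ℕ) :
    u ^ m ≤ (Nat.factorial m : ℝ) * Real.exp u := by
  have h := Real.sum_le_exp_of_nonneg hu (m + 1)
  have h2 : u ^ m / (Nat.factorial m : ℝ) ≤ Real.exp u :=
    le_trans (Finset.single_le_sum (f := fun i => u ^ i / (Nat.factorial i : ℝ))
      (fun i _ => by positivity) (Finset.self_mem_range_succ m)) h
  have hm : (0:ℝ) < (Nat.factorial m : ℝ) := by exact_mod_cast m.factorial_pos
  rw [div_le_iff₀ hm] at h2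
  linarith [h2]

lemma exp_neg_le_rpow {c : ℝ} (hc : 0 ≤ c) {u : ℝ} (hu : 0 < u) :
    Real.exp (-u) ≤ (Nat.factorial ⌈c⌉₊ : ℝ) * u ^ (-c) := by
  have hm : (0:ℝ) < (Nat.factorial ⌈c⌉₊ : ℝ) := by exact_mod_cast (⌈c⌉₊).factorial_pos
  have key : u ^ c ≤ (Nat.factorial ⌈c⌉₊ : ℝ) * Real.exp u := by
    rcases le_or_gt u 1 with h | h
    · have h1 : u ^ c ≤ 1 := Real.rpow_le_one hu.le h hc
      have h2 : (1:ℝ) ≤ Real.exp u := Real.one_le_exp hu.le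
      have hm1 : (1:ℝ) ≤ (Nat.factorial ⌈c⌉₊ : ℝ) := by
        exact_mod_cast Nat.one_le_iff_ne_zero.mpr (⌈c⌉₊).factorial_ne_zero
      nlinarith
    · calc u ^ c ≤ u ^ (⌈c⌉₊ : ℝ) :=
            Real.rpow_le_rpow_of_exponent_le h.le (Nat.le_ceil c)
      _ = u ^ (⌈c⌉₊) := by rw [Real.rpow_natCast]
      _ ≤ (Nat.factorial ⌈c⌉₊ : ℝ) * Real.exp u := pow_le_factorial_mul_exp hu.le _
  have hu' : (0:ℝ) < u ^ c := Real.rpow_pos_of_pos hu c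
  rw [Real.exp_neg, Real.rpow_neg hu.le]
  rw [inv_le_iff_one_le_mul₀ (Real.exp_pos u)]
  rw [show (Nat.factorial ⌈c⌉₊ : ℝ) * (u ^ c)⁻¹ * Real.exp u
      = ((Nat.factorial ⌈c⌉₊ : ℝ) * Real.exp u) / u ^ c by field_simp,
    le_div_iff₀ hu', one_mul]
  exact key

lemma rho_integrand_continuousOn (μ x : ℝ) :
    ContinuousOn (fun t : ℝ => t ^ (μ - 1) * Real.exp (-t - x / t)) (Ioi 0) := by
  apply ContinuousOn.mul
  · exact fun t ht => (Real.continuousAt_rpow_const t (μ-1) (Or.inl (ne_of_gt ht))).continuousWithinAt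
  · apply Real.continuous_exp.comp_continuousOn
    exact ContinuousOn.sub (continuous_neg.continuousOn)
      (ContinuousOn.div continuousOn_const continuousOn_id (fun t ht => ne_of_gt ht))

lemma rho_integrand_integrableOn {μ x : ℝ} (hx : 0 < x) :
    IntegrableOn (fun t : ℝ => t ^ (μ - 1) * Real.exp (-t - x / t)) (Ioi 0) := by
  set c : ℝ := max 0 (1 - μ) with hc
  have hc0 : 0 ≤ c := le_max_left _ _
  have hμc : 0 < μ + c := by
    have h1 : 1 - μ ≤ c := le_max_right _ _
    linarith
  set m : ℕ := ⌈c⌉₊ with hm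
  have hgi : IntegrableOn
      (fun t : ℝ => ((Nat.factorial m : ℝ) * x ^ (-c)) * (Real.exp (-t) * t ^ (μ + c - 1)))
      (Ioi 0) := (Real.GammaIntegral_convergent hμc).const_mul _
  apply hgi.integrable.mono'
    ((rho_integrand_continuousOn μ x).aestronglyMeasurable measurableSet_Ioi)
  rw [ae_restrict_iff' measurableSet_Ioi]
  filter_upwards with t ht
  have ht' : (0:ℝ) < t := ht
  have h1 : Real.exp (-t - x / t) = Real.exp (-t) * Real.exp (-(x/t)) := by
    rw [← Real.exp_add]; ring_nf
  have h2 : Real.exp (-(x/t)) ≤ (Nat.factorial m : ℝ) * (x / t) ^ (-c) :=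
    exp_neg_le_rpow hc0 (div_pos hx ht')
  have h3 : (x / t) ^ (-c) = x ^ (-c) * t ^ c := by
    rw [Real.div_rpow hx.le ht'.le, Real.rpow_neg ht'.le, div_eq_mul_inv, inv_inv]
  have h4 : t ^ (μ - 1) * t ^ c = t ^ (μ + c - 1) := by
    rw [← Real.rpow_add ht']; ring_nf
  have hpos : 0 ≤ t ^ (μ - 1) := (Real.rpow_pos_of_pos ht' _).le
  have hb : t ^ (μ - 1) * Real.exp (-t - x / t)
      ≤ (Nat.factorial m : ℝ) * x ^ (-c) * (Real.exp (-t) * t ^ (μ + c - 1)) := by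
    rw [h1, ← h4]
    calc t ^ (μ - 1) * (Real.exp (-t) * Real.exp (-(x/t)))
        ≤ t ^ (μ - 1) * (Real.exp (-t) * ((Nat.factorial m : ℝ) * (x ^ (-c) * t ^ c))) := by
          apply mul_le_mul_of_nonneg_left _ hpos
          apply mul_le_mul_of_nonneg_left _ (Real.exp_pos _).le
          rw [← h3]; exact h2
      _ = (Nat.factorial m : ℝ) * x ^ (-c) * (Real.exp (-t) * (t ^ (μ - 1) * t ^ c)) := by ring
  rw [Real.norm_eq_abs, abs_of_nonneg (by positivity)]
  exact hb

lemma rho_nonneg (μ x : ℝ) : 0 ≤ rho μ x := by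
  apply setIntegral_nonneg measurableSet_Ioi
  intro t ht
  have : (0:ℝ) < t := ht
  positivity

/-- Master bound: `ρ_μ(x) ≤ C x^(-c)` on `(0,∞)`. -/
lemma rho_le (μ c : ℝ) (hc : 0 ≤ c) (hμc : 0 < μ + c) :
    ∃ C : ℝ, 0 ≤ C ∧ ∀ x ∈ Ioi (0:ℝ), rho μ x ≤ C * x ^ (-c) := by
  refine ⟨(Nat.factorial ⌈c⌉₊ : ℝ) * ∫ t in Ioi (0:ℝ), Real.exp (-t) * t ^ (μ + c - 1),
    mul_nonneg (by positivity) (setIntegral_nonneg measurableSet_Ioi fun t ht =>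
      by have : (0:ℝ) < t := ht; positivity), fun x hx => ?_⟩
  have hx' : (0:ℝ) < x := hx
  have hgi : IntegrableOn (fun t : ℝ => ((Nat.factorial ⌈c⌉₊ : ℝ) * x ^ (-c)) *
      (Real.exp (-t) * t ^ (μ + c - 1))) (Ioi 0) :=
    (Real.GammaIntegral_convergent hμc).const_mul _
  have hmono : rho μ x ≤ ∫ t in Ioi (0:ℝ), ((Nat.factorial ⌈c⌉₊ : ℝ) * x ^ (-c)) *
      (Real.exp (-t) * t ^ (μ + c - 1)) := by
    apply setIntegral_mono_on (rho_integrand_integrableOn hx') hgi measurableSet_Ioi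
    intro t ht
    have ht' : (0:ℝ) < t := ht
    have h1 : Real.exp (-t - x / t) = Real.exp (-t) * Real.exp (-(x/t)) := by
      rw [← Real.exp_add]; ring_nf
    have h2 : Real.exp (-(x/t)) ≤ (Nat.factorial ⌈c⌉₊ : ℝ) * (x / t) ^ (-c) :=
      exp_neg_le_rpow hc (div_pos hx' ht')
    have h3 : (x / t) ^ (-c) = x ^ (-c) * t ^ c := by
      rw [Real.div_rpow hx'.le ht'.le, Real.rpow_neg ht'.le, div_eq_mul_inv, inv_inv]
    have h4 : t ^ (μ - 1) * t ^ c = t ^ (μ + c - 1) := by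
      rw [← Real.rpow_add ht']; ring_nf
    calc t ^ (μ - 1) * Real.exp (-t - x / t)
        ≤ t ^ (μ - 1) * (Real.exp (-t) * ((Nat.factorial ⌈c⌉₊ : ℝ) * (x ^ (-c) * t ^ c))) := by
          rw [h1]
          apply mul_le_mul_of_nonneg_left _ (Real.rpow_pos_of_pos ht' _).le
          apply mul_le_mul_of_nonneg_left _ (Real.exp_pos _).le
          rw [← h3]; exact h2
      _ = (Nat.factorial ⌈c⌉₊ : ℝ) * x ^ (-c) * (Real.exp (-t) * (t ^ (μ - 1) * t ^ c)) := by ring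
      _ = (Nat.factorial ⌈c⌉₊ : ℝ) * x ^ (-c) * (Real.exp (-t) * t ^ (μ + c - 1)) := by rw [h4]
  calc rho μ x ≤ _ := hmono
    _ = (Nat.factorial ⌈c⌉₊ : ℝ) * (∫ t in Ioi (0:ℝ), Real.exp (-t) * t ^ (μ + c - 1)) *
        x ^ (-c) := by rw [MeasureTheory.integral_const_mul]; ring

lemma hasDerivAt_rho (μ : ℝ) {x : ℝ} (hx : 0 < x) :
    HasDerivAt (rho μ) (-rho (μ - 1) x) x := by
  have h2 : (0:ℝ) < x/2 := by linarith
  have key := hasDerivAt_integral_of_dominated_loc_of_deriv_le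
    (μ := volume.restrict (Ioi (0:ℝ))) (x₀ := x) (s := Metric.ball x (x/2))
    (F := fun y t => t ^ (μ - 1) * Real.exp (-t - y / t))
    (F' := fun y t => -(t ^ (μ - 1 - 1) * Real.exp (-t - y / t)))
    (bound := fun t => t ^ (μ - 1 - 1) * Real.exp (-t - (x/2) / t))
    (Metric.ball_mem_nhds x h2)
    (Eventually.of_forall fun y =>
      ((rho_integrand_continuousOn μ y).aestronglyMeasurable measurableSet_Ioi))
    (rho_integrand_integrableOn hx)
    (((rho_integrand_continuousOn (μ-1) x).aestronglyMeasurable measurableSet_Ioi).neg)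
    ?_ (rho_integrand_integrableOn (μ := μ - 1) h2) ?_
  · have : (fun y => ∫ t in Ioi (0:ℝ), t ^ (μ - 1) * Real.exp (-t - y / t)) = rho μ := rfl
    rw [this] at key
    have h3 : (∫ t in Ioi (0:ℝ), -(t ^ (μ - 1 - 1) * Real.exp (-t - x / t)))
        = -rho (μ - 1) x := by
      rw [MeasureTheory.integral_neg]; rfl
    rw [h3] at key
    exact key.2
  · rw [ae_restrict_iff' measurableSet_Ioi]
    filter_upwards with t ht
    intro y hy
    have ht' : (0:ℝ) < t := ht
    have hy2 : x/2 ≤ y := by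
      have := abs_lt.mp (mem_ball_iff_norm.mp hy)
      linarith [this.1]
    have : Real.exp (-t - y / t) ≤ Real.exp (-t - (x/2) / t) := by
      apply Real.exp_le_exp.mpr
      have h5 : x/2/t ≤ y/t := (div_le_div_iff_of_pos_right ht').mpr hy2
      linarith
    rw [norm_neg, Real.norm_eq_abs, abs_of_nonneg (by positivity)]
    exact mul_le_mul_of_nonneg_left this (Real.rpow_pos_of_pos ht' _).le
  · rw [ae_restrict_iff' measurableSet_Ioi]
    filter_upwards with t ht
    intro y hy
    have ht' : (0:ℝ) < t := ht
    have hd : HasDerivAt (fun y : ℝ => -t - y / t) (-(1/t)) y := by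
      simpa using ((hasDerivAt_id y).div_const t).const_sub (-t)
    have he := hd.exp
    have := he.const_mul (t ^ (μ - 1))
    refine this.congr_deriv (Eq.symm ?_)
    have : t ^ (μ - 1 - 1) = t ^ (μ - 1) * t⁻¹ := by
      rw [← Real.rpow_neg_one t, ← Real.rpow_add ht']; ring_nf
    rw [this]
    ring

/-- The recurrence `ρ_{μ+1}(x) = μ ρ_μ(x) + x ρ_{μ-1}(x)` for `x > 0`. -/
lemma rho_rec (μ : ℝ) {x : ℝ} (hx : 0 < x) :
    rho (μ + 1) x = μ * rho μ x + x * rho (μ - 1) x := by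
  set g : ℝ → ℝ := fun t => if 0 < t then t ^ μ * Real.exp (-t - x / t) else 0 with hg
  set g' : ℝ → ℝ := fun t => μ * (t ^ (μ - 1) * Real.exp (-t - x / t))
      + x * (t ^ (μ - 1 - 1) * Real.exp (-t - x / t))
      - t ^ (μ + 1 - 1) * Real.exp (-t - x / t) with hg'
  have hg0 : g 0 = 0 := by simp [hg]
  -- derivative of g on (0, ∞)
  have hderiv : ∀ t ∈ Ioi (0:ℝ), HasDerivAt g (g' t) t := by
    intro t ht
    have ht' : (0:ℝ) < t := ht
    have heq : g =ᶠ[nhds t] (fun t => t ^ μ * Real.exp (-t - x / t)) := by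
      filter_upwards [IsOpen.mem_nhds isOpen_Ioi ht] with s hs
      simp [hg, if_pos (show (0:ℝ) < s from hs)]
    have hin : HasDerivAt (fun t : ℝ => -t - x / t) (-1 + x * (t^2)⁻¹) t := by
      have h1 : HasDerivAt (fun t : ℝ => t⁻¹) (-(t^2)⁻¹) t := hasDerivAt_inv ht'.ne'
      have h3 := ((hasDerivAt_id t).neg).sub (h1.const_mul x)
      rw [show (-1 : ℝ) + x * (t^2)⁻¹ = -1 - x * -(t^2)⁻¹ by ring]
      exact h3.congr_of_eventuallyEq (Eventually.of_forall fun s => by simp [div_eq_mul_inv])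
    have hpow : HasDerivAt (fun t : ℝ => t ^ μ) (μ * t ^ (μ - 1)) t := by
      simpa [mul_comm] using Real.hasDerivAt_rpow_const (p := μ) (Or.inl ht'.ne')
    have hmul := hpow.mul hin.exp
    have hsm : HasDerivAt (fun t : ℝ => t ^ μ * Real.exp (-t - x / t)) (g' t) t := by
      refine hmul.congr_deriv (Eq.symm ?_)
      have e1 : t ^ (μ + 1 - 1) = t ^ μ := by rw [show μ + 1 - 1 = μ by ring]
      have e2 : t ^ (μ - 1 - 1) = t ^ μ * (t^2)⁻¹ := by
        rw [show μ - 1 - 1 = μ - 2 by ring, Real.rpow_sub ht',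
          show (2:ℝ) = ((2:ℕ):ℝ) by norm_num, Real.rpow_natCast, div_eq_mul_inv]
      show μ * (t ^ (μ - 1) * Real.exp (-t - x / t))
          + x * (t ^ (μ - 1 - 1) * Real.exp (-t - x / t))
          - t ^ (μ + 1 - 1) * Real.exp (-t - x / t) = _
      rw [e1, e2]; ring
    exact hsm.congr_of_eventuallyEq heq
  -- continuity at 0 from the right
  have hcont : ContinuousWithinAt g (Ici (0:ℝ)) 0 := by
    rw [ContinuousWithinAt, hg0]
    set c : ℝ := max 0 (1 - μ) with hc
    have hc0 : 0 ≤ c := le_max_left _ _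
    have hμc : 0 < μ + c := by have : 1 - μ ≤ c := le_max_right _ _; linarith
    set D : ℝ := (Nat.factorial ⌈c⌉₊ : ℝ) * x ^ (-c) with hD
    have hD0 : 0 ≤ D := by positivity
    apply squeeze_zero_norm' (a := fun t => D * t ^ (μ + c))
    · filter_upwards [self_mem_nhdsWithin] with t (ht : t ∈ Ici (0:ℝ))
      rcases eq_or_lt_of_le (show (0:ℝ) ≤ t from ht) with h | h
      · rw [← h, hg0, Real.zero_rpow hμc.ne', norm_zero, mul_zero]
      · have h1 : Real.exp (-t - x / t) ≤ Real.exp (-(x/t)) := by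
          apply Real.exp_le_exp.mpr; have := le_of_lt h; linarith [div_nonneg hx.le this]
        have h2 : Real.exp (-(x/t)) ≤ (Nat.factorial ⌈c⌉₊ : ℝ) * (x / t) ^ (-c) :=
          exp_neg_le_rpow hc0 (div_pos hx h)
        have h3 : (x / t) ^ (-c) = x ^ (-c) * t ^ c := by
          rw [Real.div_rpow hx.le h.le, Real.rpow_neg h.le, div_eq_mul_inv, inv_inv]
        have h4 : t ^ μ * t ^ c = t ^ (μ + c) := by rw [← Real.rpow_add h]
        have : g t = t ^ μ * Real.exp (-t - x / t) := by simp [hg, if_pos h]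
        rw [this, Real.norm_eq_abs, abs_of_nonneg (by positivity)]
        calc t ^ μ * Real.exp (-t - x / t)
            ≤ t ^ μ * ((Nat.factorial ⌈c⌉₊ : ℝ) * (x ^ (-c) * t ^ c)) := by
              apply mul_le_mul_of_nonneg_left _ (Real.rpow_pos_of_pos h _).le
              calc Real.exp (-t - x/t) ≤ Real.exp (-(x/t)) := h1
                _ ≤ (Nat.factorial ⌈c⌉₊ : ℝ) * (x / t) ^ (-c) := h2
                _ = (Nat.factorial ⌈c⌉₊ : ℝ) * (x ^ (-c) * t ^ c) := by rw [h3]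
          _ = D * (t ^ μ * t ^ c) := by rw [hD]; ring
          _ = D * t ^ (μ + c) := by rw [h4]
    · have : Tendsto (fun t : ℝ => t ^ (μ + c)) (nhds 0) (nhds ((0:ℝ) ^ (μ + c))) :=
        (Real.continuousAt_rpow_const 0 (μ + c) (Or.inr hμc.le)).tendsto
      rw [Real.zero_rpow hμc.ne'] at this
      simpa using (this.const_mul D).mono_left nhdsWithin_le_nhds
  -- limit at infinity
  have htop : Tendsto g atTop (nhds 0) := by
    apply squeeze_zero_norm' (a := fun t => t ^ μ * Real.exp (-1 * t))
    · filter_upwards [eventually_gt_atTop (0:ℝ)] with t ht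
      have : g t = t ^ μ * Real.exp (-t - x / t) := by simp [hg, if_pos ht]
      rw [this, Real.norm_eq_abs, abs_of_nonneg (by positivity)]
      apply mul_le_mul_of_nonneg_left _ (Real.rpow_pos_of_pos ht _).le
      apply Real.exp_le_exp.mpr
      have : 0 < x / t := div_pos hx ht
      linarith
    · exact tendsto_rpow_mul_exp_neg_mul_atTop_nhds_zero μ 1 one_pos
  -- g' is integrable
  have hA := rho_integrand_integrableOn (μ := μ) hx
  have hB := rho_integrand_integrableOn (μ := μ - 1) hx
  have hC := rho_integrand_integrableOn (μ := μ + 1) hx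
  have hint : IntegrableOn g' (Ioi (0:ℝ)) := ((hA.const_mul μ).add (hB.const_mul x)).sub hC
  have hzero := integral_Ioi_of_hasDerivAt_of_tendsto hcont hderiv hint htop
  rw [hg0, sub_zero] at hzero
  have hsplit : ∫ t in Ioi (0:ℝ), g' t
      = μ * rho μ x + x * rho (μ - 1) x - rho (μ + 1) x := by
    have hAB : IntegrableOn (fun t : ℝ => μ * (t ^ (μ - 1) * Real.exp (-t - x / t))
        + x * (t ^ (μ - 1 - 1) * Real.exp (-t - x / t))) (Ioi (0:ℝ)) :=
      (hA.const_mul μ).add (hB.const_mul x)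
    rw [hg']
    rw [MeasureTheory.integral_sub hAB hC,
      MeasureTheory.integral_add (hA.const_mul μ) (hB.const_mul x),
      MeasureTheory.integral_const_mul, MeasureTheory.integral_const_mul]
    rfl
  rw [hsplit] at hzero
  linarith

lemma rho_continuousOn (μ : ℝ) : ContinuousOn (rho μ) (Ioi (0:ℝ)) :=
  fun x hx => ((hasDerivAt_rho μ (show (0:ℝ) < x from hx)).continuousAt).continuousWithinAt

lemma integrableOn_rpow_mul_rho {c μ : ℝ} (hc : -1 < c) (hμ : 0 ≤ μ) :
    IntegrableOn (fun x : ℝ => x ^ c * rho μ x) (Ioi (0:ℝ)) := by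
  have hmeas : ContinuousOn (fun x : ℝ => x ^ c * rho μ x) (Ioi (0:ℝ)) :=
    ContinuousOn.mul (fun x hx =>
      (Real.continuousAt_rpow_const x c (Or.inl (ne_of_gt hx))).continuousWithinAt)
      (rho_continuousOn μ)
  have hsplit : Ioi (0:ℝ) = Ioc (0:ℝ) 1 ∪ Ioi (1:ℝ) := by
    rw [Ioc_union_Ioi_eq_Ioi zero_le_one]
  rw [hsplit]
  apply IntegrableOn.union
  · -- near 0
    set ε : ℝ := (c + 1) / 2 with hε
    have hε0 : 0 ≤ ε := by linarith
    obtain ⟨C, hC0, hC⟩ := rho_le μ ε hε0 (by linarith)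
    have hgi : IntegrableOn (fun x : ℝ => C * x ^ (c - ε)) (Ioc (0:ℝ) 1) := by
      apply Integrable.const_mul
      exact (intervalIntegral.intervalIntegrable_rpow' (by linarith)).1
    apply hgi.integrable.mono' (hmeas.mono Ioc_subset_Ioi_self |>.aestronglyMeasurable
      measurableSet_Ioc)
    rw [ae_restrict_iff' measurableSet_Ioc]
    filter_upwards with x hx
    have hx0 : (0:ℝ) < x := hx.1
    rw [Real.norm_eq_abs,
      abs_of_nonneg (mul_nonneg (Real.rpow_nonneg hx0.le c) (rho_nonneg μ x))]
    calc x ^ c * rho μ x ≤ x ^ c * (C * x ^ (-ε)) :=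
          mul_le_mul_of_nonneg_left (hC x hx0) (Real.rpow_nonneg hx0.le c)
      _ = C * x ^ (c - ε) := by
          rw [show c - ε = c + (-ε) by ring, Real.rpow_add hx0]; ring
  · -- away from 0
    set d : ℝ := c + 2 with hd
    have hd0 : 0 ≤ d := by linarith
    obtain ⟨C, hC0, hC⟩ := rho_le μ d hd0 (by linarith)
    have hgi : IntegrableOn (fun x : ℝ => C * x ^ (c - d)) (Ioi (1:ℝ)) := by
      apply Integrable.const_mul
      have : c - d = -2 := by rw [hd]; ring
      rw [this]
      exact integrableOn_Ioi_rpow_of_lt (by norm_num) one_pos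
    apply hgi.integrable.mono' (hmeas.mono (Ioi_subset_Ioi zero_le_one) |>.aestronglyMeasurable
      measurableSet_Ioi)
    rw [ae_restrict_iff' measurableSet_Ioi]
    filter_upwards with x hx
    have hx0 : (0:ℝ) < x := lt_trans one_pos hx
    rw [Real.norm_eq_abs,
      abs_of_nonneg (mul_nonneg (Real.rpow_nonneg hx0.le c) (rho_nonneg μ x))]
    calc x ^ c * rho μ x ≤ x ^ c * (C * x ^ (-d)) :=
          mul_le_mul_of_nonneg_left (hC x hx0) (Real.rpow_nonneg hx0.le c)
      _ = C * x ^ (c - d) := by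
          rw [show c - d = c + (-d) by ring, Real.rpow_add hx0]; ring

lemma integrableOn_poly_rpow_rho (p : Polynomial ℝ) {c μ : ℝ} (hc : -1 < c) (hμ : 0 ≤ μ) :
    IntegrableOn (fun x : ℝ => p.eval x * x ^ c * rho μ x) (Ioi (0:ℝ)) := by
  have hsum : IntegrableOn (fun x : ℝ => ∑ i ∈ Finset.range (p.natDegree + 1),
      p.coeff i * (x ^ (c + i) * rho μ x)) (Ioi (0:ℝ)) := by
    apply integrable_finset_sum
    intro i _
    have : (-1:ℝ) < c + i := by
      have : (0:ℝ) ≤ (i:ℝ) := Nat.cast_nonneg i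
      linarith
    exact (integrableOn_rpow_mul_rho this hμ).const_mul _
  apply hsum.congr_fun _ measurableSet_Ioi
  intro x hx
  have hx0 : (0:ℝ) < x := hx
  show (∑ i ∈ Finset.range (p.natDegree + 1), p.coeff i * (x ^ (c + (i:ℝ)) * rho μ x))
      = Polynomial.eval x p * x ^ c * rho μ x
  rw [Polynomial.eval_eq_sum_range (p := p) x, Finset.sum_mul, Finset.sum_mul]
  apply Finset.sum_congr rfl
  intro i _
  have hpow : x ^ (c + (i:ℝ)) = x ^ (i:ℕ) * x ^ c := by
    rw [Real.rpow_add hx0, ← Real.rpow_natCast x i]; ring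
  rw [hpow]; ring

lemma poly_abs_le (p : Polynomial ℝ) {x : ℝ} (hx : 1 ≤ x) :
    |p.eval x| ≤ (∑ i ∈ Finset.range (p.natDegree + 1), |p.coeff i|) * x ^ p.natDegree := by
  have hx0 : (0:ℝ) < x := lt_of_lt_of_le one_pos hx
  rw [Polynomial.eval_eq_sum_range (p := p) x]
  calc |∑ i ∈ Finset.range (p.natDegree + 1), p.coeff i * x ^ i|
      ≤ ∑ i ∈ Finset.range (p.natDegree + 1), |p.coeff i * x ^ i| :=
        Finset.abs_sum_le_sum_abs _ _
    _ ≤ ∑ i ∈ Finset.range (p.natDegree + 1), |p.coeff i| * x ^ p.natDegree := by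
        apply Finset.sum_le_sum
        intro i hi
        rw [abs_mul, abs_of_nonneg (pow_nonneg hx0.le i)]
        exact mul_le_mul_of_nonneg_left
          (pow_le_pow_right₀ hx (Nat.lt_succ_iff.mp (Finset.mem_range.mp hi))) (abs_nonneg _)
    _ = _ := by rw [← Finset.sum_mul]

lemma tendsto_poly_rpow_rho_atTop (p : Polynomial ℝ) {β μ : ℝ} (hβ : 0 < β) (hμ : 0 ≤ μ) :
    Tendsto (fun x : ℝ => p.eval x * x ^ β * rho μ x) atTop (𝓝 0) := by
  set d : ℕ := p.natDegree with hdd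
  set S : ℝ := ∑ i ∈ Finset.range (d + 1), |p.coeff i| with hS
  have hS0 : 0 ≤ S := Finset.sum_nonneg fun i _ => abs_nonneg _
  set e : ℝ := β + d + 1 with he
  have he0 : 0 ≤ e := by positivity
  obtain ⟨C, hC0, hC⟩ := rho_le μ e he0 (by positivity)
  apply squeeze_zero_norm' (a := fun x : ℝ => (S * C) * x ^ (-(1:ℝ)))
  · filter_upwards [eventually_ge_atTop (1:ℝ)] with x hx
    have hx0 : (0:ℝ) < x := lt_of_lt_of_le one_pos hx
    have h1 : |p.eval x| ≤ S * x ^ d := poly_abs_le p hx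
    have h2 : rho μ x ≤ C * x ^ (-e) := hC x hx0
    have key2 : x ^ ((d:ℝ)) * (x ^ β * x ^ (-e)) = x ^ (-(1:ℝ)) := by
      rw [← Real.rpow_add hx0, ← Real.rpow_add hx0,
        show (d:ℝ) + (β + -e) = -(1:ℝ) by rw [he]; ring]
    have key : x ^ (d:ℕ) * (x ^ β * (C * x ^ (-e))) = C * x ^ (-(1:ℝ)) := by
      rw [← Real.rpow_natCast x d,
        show x ^ ((d:ℝ)) * (x ^ β * (C * x ^ (-e)))
          = C * (x ^ ((d:ℝ)) * (x ^ β * x ^ (-e))) by ring, key2]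
    rw [Real.norm_eq_abs, abs_mul, abs_mul,
      abs_of_nonneg (Real.rpow_nonneg hx0.le β), abs_of_nonneg (rho_nonneg μ x)]
    calc |p.eval x| * x ^ β * rho μ x
        ≤ (S * x ^ d) * x ^ β * rho μ x := by
          apply mul_le_mul_of_nonneg_right (mul_le_mul_of_nonneg_right h1
            (Real.rpow_nonneg hx0.le β)) (rho_nonneg μ x)
      _ ≤ (S * x ^ d) * x ^ β * (C * x ^ (-e)) := by
          apply mul_le_mul_of_nonneg_left h2
          positivity
      _ = S * (x ^ (d:ℕ) * (x ^ β * (C * x ^ (-e)))) := by ring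
      _ = (S * C) * x ^ (-(1:ℝ)) := by rw [key]; ring
  · simpa using (tendsto_rpow_neg_atTop one_pos).const_mul (S * C)

lemma tendsto_poly_rpow_rho_zero (p : Polynomial ℝ) {β μ : ℝ} (hβ : 0 < β) (hμ : 0 ≤ μ) :
    Tendsto (fun x : ℝ => if 0 < x then p.eval x * x ^ β * rho μ x else 0)
      (nhdsWithin 0 (Ici (0:ℝ))) (𝓝 0) := by
  obtain ⟨B, hB⟩ := (isCompact_Icc (a := (0:ℝ)) (b := 1)).exists_bound_of_continuousOn
    (p.continuous_aeval.continuousOn)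
  have hB0 : 0 ≤ B := le_trans (norm_nonneg _) (hB 0 (by norm_num))
  have hε0 : 0 ≤ β / 2 := by linarith
  obtain ⟨C, hC0, hC⟩ := rho_le μ (β/2) hε0 (by linarith)
  apply squeeze_zero_norm' (a := fun x : ℝ => (B * C) * x ^ (β/2))
  · filter_upwards [Ico_mem_nhdsGE (one_pos : (0:ℝ) < 1)]
      with x hx
    rcases eq_or_lt_of_le hx.1 with h | h
    · rw [if_neg (by rw [← h]; exact lt_irrefl 0), norm_zero, ← h,
        Real.zero_rpow (by positivity), mul_zero]
    · rw [if_pos h]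
      have h1 : |p.eval x| ≤ B := by
        have := hB x (Set.mem_Icc.mpr ⟨h.le, hx.2.le⟩)
        simpa using this
      have h2 : rho μ x ≤ C * x ^ (-(β/2)) := hC x h
      have key : x ^ β * (C * x ^ (-(β/2))) = C * x ^ (β/2) := by
        rw [show x ^ β * (C * x ^ (-(β/2))) = C * (x ^ β * x ^ (-(β/2))) by ring,
          ← Real.rpow_add h, show β + -(β/2) = β/2 by ring]
      rw [Real.norm_eq_abs, abs_mul, abs_mul,
        abs_of_nonneg (Real.rpow_nonneg h.le β), abs_of_nonneg (rho_nonneg μ x)]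
      calc |p.eval x| * x ^ β * rho μ x
          ≤ B * x ^ β * rho μ x := by
            apply mul_le_mul_of_nonneg_right (mul_le_mul_of_nonneg_right h1
              (Real.rpow_nonneg h.le β)) (rho_nonneg μ x)
        _ ≤ B * x ^ β * (C * x ^ (-(β/2))) := by
            apply mul_le_mul_of_nonneg_left h2
            positivity
        _ = B * (x ^ β * (C * x ^ (-(β/2)))) := by ring
        _ = (B * C) * x ^ (β/2) := by rw [key]; ring
  · have : Tendsto (fun x : ℝ => x ^ (β/2)) (𝓝 0) (𝓝 ((0:ℝ) ^ (β/2))) :=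
      (Real.continuousAt_rpow_const 0 (β/2) (Or.inr hε0)).tendsto
    rw [Real.zero_rpow (by positivity)] at this
    simpa using (this.const_mul (B * C)).mono_left nhdsWithin_le_nhds

/-- Integration by parts for `∫ p' x^β ρ_μ` over `(0,∞)`. -/
lemma ibp_rho (p : Polynomial ℝ) {μ β : ℝ} (hμ : 0 ≤ μ) (hβ : 0 < β) :
    ∫ x in Ioi (0:ℝ), (Polynomial.derivative p).eval x * x ^ β * rho μ x
      = -((β + μ) * ∫ x in Ioi (0:ℝ), p.eval x * x ^ (β-1) * rho μ x)
        + ∫ x in Ioi (0:ℝ), p.eval x * x ^ (β-1) * rho (μ+1) x := by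
  set F : ℝ → ℝ := fun x => if 0 < x then p.eval x * x ^ β * rho μ x else 0 with hF
  set G : ℝ → ℝ := fun x => (Polynomial.derivative p).eval x * x ^ β * rho μ x
      + (β + μ) * (p.eval x * x ^ (β-1) * rho μ x)
      - p.eval x * x ^ (β-1) * rho (μ+1) x with hG
  have hF0 : F 0 = 0 := by simp [hF]
  have hderiv : ∀ x ∈ Ioi (0:ℝ), HasDerivAt F (G x) x := by
    intro x hx
    have hx' : (0:ℝ) < x := hx
    have heq : F =ᶠ[nhds x] (fun x => p.eval x * x ^ β * rho μ x) := by
      filter_upwards [IsOpen.mem_nhds isOpen_Ioi hx] with s hs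
      simp [hF, if_pos (show (0:ℝ) < s from hs)]
    have h1 : HasDerivAt (fun x : ℝ => p.eval x) (p.derivative.eval x) x :=
      p.hasDerivAt x
    have h2 : HasDerivAt (fun x : ℝ => x ^ β) (β * x ^ (β - 1)) x := by
      simpa [mul_comm] using Real.hasDerivAt_rpow_const (p := β) (Or.inl hx'.ne')
    have h3 := hasDerivAt_rho μ hx'
    have hmul := (h1.mul h2).mul h3
    have hsm : HasDerivAt (fun x : ℝ => p.eval x * x ^ β * rho μ x) (G x) x := by
      refine hmul.congr_deriv (Eq.symm ?_)
      have hxb : x ^ β = x ^ (β - 1) * x := by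
        rw [← Real.rpow_add_one hx'.ne' (β - 1), show β - 1 + 1 = β by ring]
      have hrec : x * rho (μ - 1) x = rho (μ + 1) x - μ * rho μ x := by
        have := rho_rec μ hx'; linarith
      show (Polynomial.derivative p).eval x * x ^ β * rho μ x
          + (β + μ) * (p.eval x * x ^ (β-1) * rho μ x)
          - p.eval x * x ^ (β-1) * rho (μ+1) x = _
      simp only [Pi.mul_apply]; rw [hxb]
      linear_combination (Polynomial.eval x p * x ^ (β-1)) * hrec
    exact hsm.congr_of_eventuallyEq heq
  have hcont : ContinuousWithinAt F (Ici (0:ℝ)) 0 := by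
    rw [ContinuousWithinAt, hF0]
    exact tendsto_poly_rpow_rho_zero p hβ hμ
  have htop : Tendsto F atTop (nhds 0) := by
    apply (tendsto_poly_rpow_rho_atTop p hβ hμ).congr'
    filter_upwards [eventually_gt_atTop (0:ℝ)] with x hx
    simp [hF, if_pos hx]
  have hI1 : IntegrableOn (fun x : ℝ => (Polynomial.derivative p).eval x * x ^ β * rho μ x)
      (Ioi (0:ℝ)) := integrableOn_poly_rpow_rho _ (by linarith) hμ
  have hI2 : IntegrableOn (fun x : ℝ => p.eval x * x ^ (β-1) * rho μ x) (Ioi (0:ℝ)) :=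
    integrableOn_poly_rpow_rho _ (by linarith) hμ
  have hI3 : IntegrableOn (fun x : ℝ => p.eval x * x ^ (β-1) * rho (μ+1) x) (Ioi (0:ℝ)) :=
    integrableOn_poly_rpow_rho _ (by linarith) (by linarith)
  have hG_int : IntegrableOn G (Ioi (0:ℝ)) := (hI1.add (hI2.const_mul (β+μ))).sub hI3
  have hzero := integral_Ioi_of_hasDerivAt_of_tendsto hcont hderiv hG_int htop
  rw [hF0, sub_zero] at hzero
  have hsplit : ∫ x in Ioi (0:ℝ), G x
      = (∫ x in Ioi (0:ℝ), (Polynomial.derivative p).eval x * x ^ β * rho μ x)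
        + (β + μ) * (∫ x in Ioi (0:ℝ), p.eval x * x ^ (β-1) * rho μ x)
        - ∫ x in Ioi (0:ℝ), p.eval x * x ^ (β-1) * rho (μ+1) x := by
    have hAB : IntegrableOn (fun x : ℝ => (Polynomial.derivative p).eval x * x ^ β * rho μ x
        + (β + μ) * (p.eval x * x ^ (β-1) * rho μ x)) (Ioi (0:ℝ)) :=
      hI1.add (hI2.const_mul (β+μ))
    rw [hG]
    rw [MeasureTheory.integral_sub hAB hI3,
      MeasureTheory.integral_add hI1 (hI2.const_mul (β+μ)),
      MeasureTheory.integral_const_mul]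
  rw [hsplit] at hzero
  linarith

/-- `p` is the monic type-2 multiple orthogonal polynomial of multi-index `(n,m)`
for the weights `x^α ρ_ν` and `x^α ρ_{ν+1}` on `(0,∞)`. -/
def IsType2MOP (ν α : ℝ) (n m : ℕ) (p : Polynomial ℝ) : Prop :=
  p.Monic ∧ p.natDegree = n + m ∧
  (∀ k : ℕ, k < n → ∫ x in Set.Ioi (0:ℝ), p.eval x * x ^ ((k : ℝ) + α) * rho ν x = 0) ∧
  (∀ k : ℕ, k < m → ∫ x in Set.Ioi (0:ℝ), p.eval x * x ^ ((k : ℝ) + α) * rho (ν + 1) x = 0)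

theorem type2_deriv_nnm1 (ν α : ℝ) (hν : 0 ≤ ν) (hα : -1 < α) (n : ℕ) (hn : 1 ≤ n)
    (P Q : Polynomial ℝ)
    (hP : IsType2MOP ν α n (n - 1) P) (hQ : IsType2MOP ν (α + 1) (n - 1) (n - 1) Q)
    (hQuniq : ∀ R : Polynomial ℝ, IsType2MOP ν (α + 1) (n - 1) (n - 1) R → R = Q) :
    Polynomial.derivative P = Polynomial.C ((2 * n - 1 : ℕ) : ℝ) * Q := by
  obtain ⟨hPmon, hPdeg, hPorth1, hPorth2⟩ := hP
  set c : ℝ := ((2 * n - 1 : ℕ) : ℝ) with hc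
  have hc0 : 0 < c := by
    rw [hc]; exact_mod_cast Nat.pos_of_ne_zero (by omega)
  have hcne : c ≠ 0 := ne_of_gt hc0
  set P' : Polynomial ℝ := Polynomial.derivative P with hP'
  have hPdeg' : P.natDegree = 2 * n - 1 := by rw [hPdeg]; omega
  -- coefficient of P' in degree 2n-2
  have hcoeff : P'.coeff (2 * n - 2) = c := by
    rw [hP', Polynomial.coeff_derivative, show 2 * n - 2 + 1 = 2 * n - 1 by omega]
    have h1 : P.coeff (2 * n - 1) = 1 := by
      have := hPmon.coeff_natDegree
      rwa [hPdeg'] at this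
    rw [h1, one_mul, hc]
    push_cast [Nat.cast_sub (by omega : 2 ≤ 2 * n), Nat.cast_sub (by omega : 1 ≤ 2 * n)]
    ring
  have hP'ne : P' ≠ 0 := by
    intro h
    rw [h, Polynomial.coeff_zero] at hcoeff
    exact hcne hcoeff.symm
  have hP'deg : P'.natDegree = 2 * n - 2 := by
    apply le_antisymm
    · have h2 := Polynomial.natDegree_derivative_le P
      rw [← hP', hPdeg'] at h2
      omega
    · exact Polynomial.le_natDegree_of_ne_zero (by rw [hcoeff]; exact hcne)
  have hP'lead : P'.leadingCoeff = c := by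
    rw [Polynomial.leadingCoeff, hP'deg, hcoeff]
  set R : Polynomial ℝ := Polynomial.C c⁻¹ * P' with hR
  have hRmon : R.Monic := by
    rw [Polynomial.Monic, hR, Polynomial.leadingCoeff_mul, Polynomial.leadingCoeff_C, hP'lead]
    exact inv_mul_cancel₀ hcne
  have hRdeg : R.natDegree = (n - 1) + (n - 1) := by
    rw [hR, Polynomial.natDegree_mul (by
        simpa using inv_ne_zero hcne) hP'ne, Polynomial.natDegree_C, hP'deg]
    omega
  -- evaluation of R
  have hReval : ∀ x : ℝ, R.eval x = c⁻¹ * P'.eval x := by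
    intro x; rw [hR, Polynomial.eval_mul, Polynomial.eval_C]
  -- the orthogonality conditions for R
  have horth : ∀ k : ℕ, k < n - 1 →
      (∫ x in Set.Ioi (0:ℝ), R.eval x * x ^ ((k : ℝ) + (α + 1)) * rho ν x = 0) ∧
      (∫ x in Set.Ioi (0:ℝ), R.eval x * x ^ ((k : ℝ) + (α + 1)) * rho (ν + 1) x = 0) := by
    intro k hk
    have hkn : k < n := by omega
    have hβ : 0 < (k : ℝ) + α + 1 := by
      have : (0:ℝ) ≤ (k : ℝ) := Nat.cast_nonneg k
      linarith
    have hrw : (k : ℝ) + (α + 1) = (k : ℝ) + α + 1 := by ring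
    have hrw2 : (k : ℝ) + α + 1 - 1 = (k : ℝ) + α := by ring
    constructor
    · -- weight ρ_ν
      rw [hrw]
      have h0 : (fun x : ℝ => R.eval x * x ^ ((k : ℝ) + α + 1) * rho ν x)
          = fun x : ℝ => c⁻¹ * (P'.eval x * x ^ ((k : ℝ) + α + 1) * rho ν x) := by
        funext x; rw [hReval]; ring
      rw [h0, MeasureTheory.integral_const_mul]
      have hibp := ibp_rho P hν hβ
      rw [hrw2] at hibp
      rw [← hP'] at hibp
      rw [hibp, hPorth1 k hkn, hPorth2 k hk]
      ring
    · -- weight ρ_{ν+1}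
      rw [hrw]
      have h0 : (fun x : ℝ => R.eval x * x ^ ((k : ℝ) + α + 1) * rho (ν + 1) x)
          = fun x : ℝ => c⁻¹ * (P'.eval x * x ^ ((k : ℝ) + α + 1) * rho (ν + 1) x) := by
        funext x; rw [hReval]; ring
      rw [h0, MeasureTheory.integral_const_mul]
      have hibp := ibp_rho P (show (0:ℝ) ≤ ν + 1 by linarith) hβ
      rw [hrw2, ← hP'] at hibp
      -- the last integral: ∫ P x^{k+α} ρ_{ν+2} = 0
      have hlast : ∫ x in Set.Ioi (0:ℝ), P.eval x * x ^ ((k : ℝ) + α) * rho (ν + 1 + 1) x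
          = 0 := by
        have hcong : ∀ x ∈ Set.Ioi (0:ℝ),
            P.eval x * x ^ ((k : ℝ) + α) * rho (ν + 1 + 1) x
            = (ν + 1) * (P.eval x * x ^ ((k : ℝ) + α) * rho (ν + 1) x)
              + P.eval x * x ^ (((k + 1 : ℕ) : ℝ) + α) * rho ν x := by
          intro x hx
          have hx' : (0:ℝ) < x := hx
          have hrec := rho_rec (ν + 1) hx'
          rw [show ν + 1 - 1 = ν by ring] at hrec
          have hxp : x ^ (((k + 1 : ℕ) : ℝ) + α) = x ^ ((k : ℝ) + α) * x := by
            rw [← Real.rpow_add_one hx'.ne' ((k : ℝ) + α)]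
            congr 1
            push_cast
            ring
          rw [hrec, hxp]
          ring
        rw [setIntegral_congr_fun measurableSet_Ioi hcong]
        have hI1 : IntegrableOn
            (fun x : ℝ => P.eval x * x ^ ((k : ℝ) + α) * rho (ν + 1) x) (Set.Ioi (0:ℝ)) :=
          integrableOn_poly_rpow_rho P (by
            have : (0:ℝ) ≤ (k : ℝ) := Nat.cast_nonneg k; linarith) (by linarith)
        have hI2 : IntegrableOn
            (fun x : ℝ => P.eval x * x ^ (((k + 1 : ℕ) : ℝ) + α) * rho ν x)
            (Set.Ioi (0:ℝ)) :=
          integrableOn_poly_rpow_rho P (by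
            have : (0:ℝ) ≤ ((k + 1 : ℕ) : ℝ) := Nat.cast_nonneg _; linarith) hν
        rw [MeasureTheory.integral_add (hI1.const_mul (ν + 1)) hI2,
          MeasureTheory.integral_const_mul, hPorth2 k hk, hPorth1 (k + 1) (by omega)]
        ring
      rw [hibp, hPorth2 k hk, hlast]
      ring
  have hRmop : IsType2MOP ν (α + 1) (n - 1) (n - 1) R :=
    ⟨hRmon, hRdeg, fun k hk => (horth k hk).1, fun k hk => (horth k hk).2⟩
  have hRQ : R = Q := hQuniq R hRmop
  rw [← hRQ, hR, ← mul_assoc, ← Polynomial.C_mul, mul_inv_cancel₀ hcne, Polynomial.C_1, one_mul]
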